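/- arXiv:2601.22659 — 3 statements merged into one kernel-verified Lean document; each statement's English description precedes it below -/
import Mathlib

section
/- Lemma 2 (gradient part): Let θ = (α, β')' ∈ ℝ^{1+m} be arbitrary with β_m ≠ 0. Suppose the conditional distribution of X_m given X_{−m} = (X_1,…,X_{m−1})' admits a Lebesgue density almost surely and E‖X‖ < ∞. Then the population SVM objective Q(θ) = E[1 − Y(α + X'β)]₊ is differentiable at θ, with gradient ∇Q(θ) = −E[ 1{1 − Y(α + X'β) > 0} · Y · (1, X')' ]. -/
open MeasureTheory ProbabilityTheory Filter Set
open scoped ENNReal Topology RealInnerProductSpace BigOperators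

noncomputable section

/-- Euclidean space `ℝ^m`. -/
abbrev Euc (m : ℕ) := EuclideanSpace ℝ (Fin m)

/-- The sign function: `sgn z = 1` if `z ≥ 0`, `-1` otherwise. -/
def sgn (z : ℝ) : ℝ := if 0 ≤ z then 1 else -1

/-- The hinge function `[1 - z]₊ = max (1 - z) 0`. -/
def hinge (z : ℝ) : ℝ := max (1 - z) 0

/-- `paramOf a b = (a, b')' ∈ ℝ^{1+m}`. -/
def paramOf {m : ℕ} (a : ℝ) (b : Euc m) : Euc (m + 1) :=
  WithLp.toLp 2 (fun i => (Fin.cons a (fun j => b j) : Fin (m + 1) → ℝ) i)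

/-- `tl x = (1, x')'`, the covariate vector augmented by the constant 1,
so that `⟪θ, tl x⟫ = α + x'β` for `θ = (α, β')'`. -/
def tl {m : ℕ} (x : Euc m) : Euc (m + 1) := paramOf 1 x

/-- The intercept component `α` of a parameter `θ = (α, β')'`. -/
def icpt {m : ℕ} (θ : Euc (m + 1)) : ℝ := θ 0

/-- The slopeOf component `β` of a parameter `θ = (α, β')'`. -/
def slopeOf {m : ℕ} (θ : Euc (m + 1)) : Euc m := WithLp.toLp 2 (fun i => θ i.succ)

/-- Drop the last coordinate: `x ↦ x_{-m}`. -/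
def dropLast {d : ℕ} (x : Euc (d + 1)) : Euc d := WithLp.toLp 2 (fun i => x i.castSucc)

/-- Replace the last coordinate of `x` by `t`. -/
def setLast {d : ℕ} (x : Euc (d + 1)) (t : ℝ) : Euc (d + 1) :=
  WithLp.toLp 2 (fun i => if i = Fin.last d then t else x i)

variable {Ω : Type*}

/-- Assumption 1: `med(U | X) = 0` almost surely, i.e. `P{U ≤ 0 | X} ≥ 1/2` and
`P{U ≥ 0 | X} ≥ 1/2` a.s. -/
def medZero [MeasurableSpace Ω] (μ : Measure Ω) {m : ℕ} (U : Ω → ℝ) (X : Ω → Euc m) : Prop :=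
  (∀ᵐ ω ∂μ, (1 / 2 : ℝ) ≤
    (μ[Set.indicator {ω' | U ω' ≤ 0} (fun _ => (1 : ℝ)) | MeasurableSpace.comap X inferInstance]) ω) ∧
  (∀ᵐ ω ∂μ, (1 / 2 : ℝ) ≤
    (μ[Set.indicator {ω' | 0 ≤ U ω'} (fun _ => (1 : ℝ)) | MeasurableSpace.comap X inferInstance]) ω)

/-- Assumption 2(a), density part: the conditional distribution of `X_m` given `X_{-m}` has an
everywhere positive Lebesgue density, almost surely in `L(X_{-m})`. -/
def posCondDensity [MeasurableSpace Ω] (μ : Measure Ω) [IsFiniteMeasure μ] {d : ℕ}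
    (X : Ω → Euc (d + 1)) : Prop :=
  ∀ᵐ z ∂(μ.map (fun ω => dropLast (X ω))), ∃ f : ℝ → ℝ≥0∞, (∀ t, 0 < f t) ∧
    condDistrib (fun ω => X ω (Fin.last d)) (fun ω => dropLast (X ω)) μ z
      = MeasureTheory.volume.withDensity f

/-- The conditional distribution of `X_m` given `X_{-m}` admits a Lebesgue density, a.s. -/
def hasCondDensity [MeasurableSpace Ω] (μ : Measure Ω) [IsFiniteMeasure μ] {d : ℕ}
    (X : Ω → Euc (d + 1)) : Prop :=
  ∀ᵐ z ∂(μ.map (fun ω => dropLast (X ω))), ∃ f : ℝ → ℝ≥0∞,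
    condDistrib (fun ω => X ω (Fin.last d)) (fun ω => dropLast (X ω)) μ z
      = MeasureTheory.volume.withDensity f

/-- Assumption 2(b): `0 < P{Y = 1 | X} < 1` almost surely. -/
def ccpNondegenerate [MeasurableSpace Ω] (μ : Measure Ω) {m : ℕ}
    (Y : Ω → ℝ) (X : Ω → Euc m) : Prop :=
  ∀ᵐ ω ∂μ,
    0 < (μ[Set.indicator {ω' | Y ω' = 1} (fun _ => (1 : ℝ)) |
          MeasurableSpace.comap X inferInstance]) ω ∧
    (μ[Set.indicator {ω' | Y ω' = 1} (fun _ => (1 : ℝ)) |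
          MeasurableSpace.comap X inferInstance]) ω < 1

/-- Assumption 2(c): the support of `L(X)` is not contained in any proper linear subspace. -/
def fullSupport [MeasurableSpace Ω] (μ : Measure Ω) {m : ℕ} (X : Ω → Euc m) : Prop :=
  ∀ S : Submodule ℝ (Euc m), (∀ᵐ ω ∂μ, X ω ∈ S) → S = ⊤

/-- Assumption 4(b): the conditional Lebesgue density `p(x_m | x_{-m})` is uniformly bounded and
continuous in `x_m`. -/
def bddContCondDensity [MeasurableSpace Ω] (μ : Measure Ω) [IsFiniteMeasure μ] {d : ℕ}
    (X : Ω → Euc (d + 1)) : Prop :=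
  ∃ (K : ℝ) (f : Euc d → ℝ → ℝ), (∀ z t, 0 ≤ f z t ∧ f z t ≤ K) ∧ (∀ z, Continuous (f z)) ∧
    ∀ᵐ z ∂(μ.map (fun ω => dropLast (X ω))),
      condDistrib (fun ω => X ω (Fin.last d)) (fun ω => dropLast (X ω)) μ z
        = MeasureTheory.volume.withDensity (fun t => ENNReal.ofReal (f z t))

/-- Assumption 4(c): `x ↦ P{Y = 1 | X = x}` is continuous in `x_m`. -/
def ccpContinuousInLast [MeasurableSpace Ω] (μ : Measure Ω) {d : ℕ}
    (Y : Ω → ℝ) (X : Ω → Euc (d + 1)) : Prop :=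
  ∃ g : Euc (d + 1) → ℝ,
    ((μ[Set.indicator {ω' | Y ω' = 1} (fun _ => (1 : ℝ)) |
        MeasurableSpace.comap X inferInstance]) =ᵐ[μ] fun ω => g (X ω)) ∧
    ∀ x : Euc (d + 1), Continuous (fun t : ℝ => g (setLast x t))

/-- Assumption 5 (index dependence): `L(U | X) = L(U | V)`. -/
def indexDependence [MeasurableSpace Ω] (μ : Measure Ω) [IsFiniteMeasure μ] {m : ℕ}
    (U : Ω → ℝ) (X : Ω → Euc m) (V : Ω → ℝ) : Prop :=
  ∀ᵐ ω ∂μ, condDistrib U X μ (X ω) = condDistrib U V μ (V ω)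

/-- Assumption 6 (linearity in expectation): `E(X | V) = aV + b` for some `a, b ∈ ℝ^m`. -/
def linearCondMean [MeasurableSpace Ω] (μ : Measure Ω) {m : ℕ}
    (X : Ω → Euc m) (V : Ω → ℝ) : Prop :=
  ∃ a b : Euc m, ∀ i,
    (μ[fun ω => X ω i | MeasurableSpace.comap V inferInstance]) =ᵐ[μ]
      fun ω => a i * V ω + b i

/-- `p(v) = P{U ≤ V < v}`. -/
def pFun [MeasurableSpace Ω] (μ : Measure Ω) (U V : Ω → ℝ) (v : ℝ) : ℝ :=
  (μ {ω | U ω ≤ V ω ∧ V ω < v}).toReal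

/-- `q(v) = P{U > V > v}`. -/
def qFun [MeasurableSpace Ω] (μ : Measure Ω) (U V : Ω → ℝ) (v : ℝ) : ℝ :=
  (μ {ω | V ω < U ω ∧ v < V ω}).toReal

/-- `τ(v) = E[V · 1{U ≤ V < v}]`. -/
def tauFun [MeasurableSpace Ω] (μ : Measure Ω) (U V : Ω → ℝ) (v : ℝ) : ℝ :=
  ∫ ω, (if U ω ≤ V ω ∧ V ω < v then V ω else 0) ∂μ

/-- `σ(v) = E[V · 1{U > V > v}]`. -/
def sigFun [MeasurableSpace Ω] (μ : Measure Ω) (U V : Ω → ℝ) (v : ℝ) : ℝ :=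
  ∫ ω, (if V ω < U ω ∧ v < V ω then V ω else 0) ∂μ

/-- `τ(∞) = E[V · 1{U ≤ V}]`. -/
def tauInf [MeasurableSpace Ω] (μ : Measure Ω) (U V : Ω → ℝ) : ℝ :=
  ∫ ω, (if U ω ≤ V ω then V ω else 0) ∂μ

/-- `σ(-∞) = E[V · 1{U > V}]`. -/
def sigInf [MeasurableSpace Ω] (μ : Measure Ω) (U V : Ω → ℝ) : ℝ :=
  ∫ ω, (if V ω < U ω then V ω else 0) ∂μ

/-- Assumption 7 (non-severe imbalance): `τ(v̄) > σ(-∞)`, where `v̄ = (p⁻¹ ∘ q)(-∞)` is the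
(unique, by strict monotonicity of `p`) solution of `p(v̄) = P{U > V}` when a finite solution
exists, and `v̄ = ∞` (in which case `τ(v̄) = τ(∞)`) otherwise. -/
def nonSevereImbalance [MeasurableSpace Ω] (μ : Measure Ω) (U V : Ω → ℝ) : Prop :=
  (∃ vbar : ℝ, pFun μ U V vbar = (μ {ω | V ω < U ω}).toReal ∧
      sigInf μ U V < tauFun μ U V vbar) ∨
  ((∀ v : ℝ, pFun μ U V v < (μ {ω | V ω < U ω}).toReal) ∧ sigInf μ U V < tauInf μ U V)

/-- Population SVM objective `Q(θ) = E[1 - Y(α + X'β)]₊`. -/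
def Qpop [MeasurableSpace Ω] (μ : Measure Ω) {m : ℕ} (Y : Ω → ℝ) (X : Ω → Euc m)
    (θ : Euc (m + 1)) : ℝ :=
  ∫ ω, hinge (Y ω * ⟪θ, tl (X ω)⟫) ∂μ

/-- Restricted population SVM objective `Q•(c, r) = E[1 - Y(cV + r)]₊`. -/
def Qbul [MeasurableSpace Ω] (μ : Measure Ω) (Y V : Ω → ℝ) (c r : ℝ) : ℝ :=
  ∫ ω, hinge (Y ω * (c * V ω + r)) ∂μ

/-- Sample SVM objective `Q_n(θ) = n⁻¹ Σ [1 - Y_i(α + X_i'β)]₊ + (λ_n/n)‖β‖²`. -/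
def Qn {m : ℕ} (Ys : ℕ → Ω → ℝ) (Xs : ℕ → Ω → Euc m) (lam : ℕ → ℝ)
    (n : ℕ) (ω : Ω) (θ : Euc (m + 1)) : ℝ :=
  (1 / (n : ℝ)) * ∑ i ∈ Finset.range n, hinge (Ys i ω * ⟪θ, tl (Xs i ω)⟫)
    + (lam n / (n : ℝ)) * ‖slopeOf θ‖ ^ 2

/-- `(Y_i, X_i)` are i.i.d. copies of `(Y, X)`. -/
def iidCopies [MeasurableSpace Ω] (μ : Measure Ω) {m : ℕ} (Y : Ω → ℝ) (X : Ω → Euc m)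
    (Ys : ℕ → Ω → ℝ) (Xs : ℕ → Ω → Euc m) : Prop :=
  iIndepFun (fun n ω => (Ys n ω, Xs n ω)) μ ∧
  (∀ n, Measurable (Ys n) ∧ Measurable (Xs n)) ∧
  ∀ n, μ.map (fun ω => (Ys n ω, Xs n ω)) = μ.map (fun ω => (Y ω, X ω))

/-- `θhat n` is the (assumed to exist and be unique) minimizer of the sample SVM objective
over `Θ`, for each `n` and each sample realization. -/
def isSVMEstimator {m : ℕ} (Ys : ℕ → Ω → ℝ) (Xs : ℕ → Ω → Euc m) (lam : ℕ → ℝ)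
    (Θ : Set (Euc (m + 1))) (θhat : ℕ → Ω → Euc (m + 1)) : Prop :=
  ∀ n ω, θhat n ω ∈ Θ ∧ IsMinOn (Qn Ys Xs lam n ω) Θ (θhat n ω) ∧
    ∀ θ ∈ Θ, IsMinOn (Qn Ys Xs lam n ω) Θ θ → θ = θhat n ω

/-- Sample maximum score objective `Q̂_ms(α, β) = n⁻¹ Σ Y_i · 1{α + β'X_i ≥ 0}`. -/
def Qms {m : ℕ} (Ys : ℕ → Ω → ℝ) (Xs : ℕ → Ω → Euc m) (n : ℕ) (ω : Ω)
    (a : ℝ) (b : Euc m) : ℝ :=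
  (1 / (n : ℝ)) * ∑ i ∈ Finset.range n, Ys i ω * (if 0 ≤ a + ⟪b, Xs i ω⟫ then 1 else 0)

/-- Sample class weight `ŵ = #{Y_i = 1} / #{Y_i = -1}`. -/
def wHat (Ys : ℕ → Ω → ℝ) (n : ℕ) (ω : Ω) : ℝ :=
  (∑ i ∈ Finset.range n, if Ys i ω = 1 then (1 : ℝ) else 0) /
  (∑ i ∈ Finset.range n, if Ys i ω = -1 then (1 : ℝ) else 0)

/-- Sample class-weighted SVM objective. -/
def Qnw {m : ℕ} (Ys : ℕ → Ω → ℝ) (Xs : ℕ → Ω → Euc m) (lam : ℕ → ℝ)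
    (n : ℕ) (ω : Ω) (θ : Euc (m + 1)) : ℝ :=
  (1 / (n : ℝ)) * ∑ i ∈ Finset.range n,
      ((if Ys i ω = 1 then hinge ⟪θ, tl (Xs i ω)⟫ else 0)
        + wHat Ys n ω * (if Ys i ω = -1 then hinge (-⟪θ, tl (Xs i ω)⟫) else 0))
    + (lam n / (n : ℝ)) * ‖slopeOf θ‖ ^ 2

/-- `θhat n` is the (assumed to exist and be unique) minimizer of the sample class-weighted SVM
objective over `Θ`. -/
def isWeightedSVMEstimator {m : ℕ} (Ys : ℕ → Ω → ℝ) (Xs : ℕ → Ω → Euc m) (lam : ℕ → ℝ)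
    (Θ : Set (Euc (m + 1))) (θhat : ℕ → Ω → Euc (m + 1)) : Prop :=
  ∀ n ω, θhat n ω ∈ Θ ∧ IsMinOn (Qnw Ys Xs lam n ω) Θ (θhat n ω) ∧
    ∀ θ ∈ Θ, IsMinOn (Qnw Ys Xs lam n ω) Θ θ → θ = θhat n ω


lemma measurable_tl {m : ℕ} : Measurable (tl (m := m)) := by
  unfold tl paramOf
  refine (WithLp.measurable_toLp _ _).comp ?_
  rw [measurable_pi_iff]
  intro i
  induction i using Fin.cases with
  | zero => simpa using measurable_const
  | succ j => simp only [Fin.cons_succ]; exact (measurable_pi_apply j).comp (WithLp.measurable_ofLp _ _)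

lemma measurable_dropLast {d : ℕ} : Measurable (dropLast (d := d)) := by
  unfold dropLast
  refine (WithLp.measurable_toLp _ _).comp ?_
  rw [measurable_pi_iff]
  intro i
  exact (measurable_pi_apply _).comp (WithLp.measurable_ofLp _ _)

lemma lipschitz_hinge : LipschitzWith 1 hinge := by
  refine LipschitzWith.of_dist_le_mul fun a b => ?_
  simp only [hinge, Real.dist_eq, NNReal.coe_one, one_mul]
  calc |max (1-a) 0 - max (1-b) 0| ≤ |(1-a) - (1-b)| := abs_max_sub_max_le_abs _ _ _
    _ = |a - b| := by rw [show (1-a) - (1-b) = -(a-b) by ring, abs_neg]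

lemma norm_tl_le {m : ℕ} (x : Euc m) : ‖tl x‖ ≤ 1 + ‖x‖ := by
  have h1 : ‖tl x‖ ^ 2 = 1 + ‖x‖ ^ 2 := by
    rw [EuclideanSpace.norm_eq, EuclideanSpace.norm_eq, Real.sq_sqrt (by positivity),
      Real.sq_sqrt (by positivity)]
    simp [tl, paramOf, Fin.sum_univ_succ]
  nlinarith [norm_nonneg x, norm_nonneg (tl x), sq_nonneg (‖x‖ - ‖tl x‖)]

lemma inner_tl_eq {d : ℕ} (θ : Euc (d + 2)) (x : Euc (d + 1)) :
    ⟪θ, tl x⟫ = (θ 0 + ∑ i : Fin d, θ i.castSucc.succ * dropLast x i)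
      + θ (Fin.last (d + 1)) * x (Fin.last d) := by
  rw [PiLp.inner_apply]
  simp only [RCLike.inner_apply, conj_trivial]
  rw [Fin.sum_univ_succ]
  simp only [tl, paramOf, Fin.cons_zero, Fin.cons_succ]
  rw [Fin.sum_univ_castSucc]
  simp [dropLast, Fin.succ_last, mul_comm]
  ring


lemma null_level {Ω : Type*} [MeasurableSpace Ω] (μ : Measure Ω) [IsProbabilityMeasure μ]
    {d : ℕ} (X : Ω → Euc (d + 1)) (hXm : Measurable X) (hdens : hasCondDensity μ X)
    (θ : Euc (d + 2)) (hβm : θ (Fin.last (d + 1)) ≠ 0) (s : ℝ) :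
    μ {ω | ⟪θ, tl (X ω)⟫ = s} = 0 := by
  set W : Ω → Euc d := fun ω => dropLast (X ω) with hWdef
  set Z : Ω → ℝ := fun ω => X ω (Fin.last d) with hZdef
  have hW : Measurable W := measurable_dropLast.comp hXm
  have hZ : Measurable Z := (measurable_pi_apply _).comp ((WithLp.measurable_ofLp _ _).comp hXm)
  set c : Euc d → ℝ :=
    fun z => (s - (θ 0 + ∑ i : Fin d, θ i.castSucc.succ * z i)) / θ (Fin.last (d + 1)) with hcdef
  have hc : Measurable c := by
    apply Measurable.div_const
    apply Measurable.const_sub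
    exact ((Finset.measurable_sum _ fun i _ =>
      (measurable_pi_apply (i : Fin d)).const_mul _).const_add _).comp (WithLp.measurable_ofLp _ _)
  have hset : {ω | ⟪θ, tl (X ω)⟫ = s} = {ω | Z ω = c (W ω)} := by
    ext ω
    simp only [mem_setOf_eq, inner_tl_eq, hcdef]
    rw [eq_div_iff hβm]
    constructor <;> intro h <;> [skip; skip] <;> nlinarith [h]
  rw [hset]
  set S : Set (Euc d × ℝ) := {p | p.2 = c p.1} with hSdef
  have hS : MeasurableSet S := measurableSet_eq_fun measurable_snd (hc.comp measurable_fst)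
  have hmap : μ {ω | Z ω = c (W ω)} = μ.map (fun ω => (W ω, Z ω)) S := by
    rw [Measure.map_apply (hW.prodMk hZ) hS]
    rfl
  rw [hmap]
  haveI : IsProbabilityMeasure (μ.map (fun ω => (W ω, Z ω))) :=
    Measure.isProbabilityMeasure_map (hW.prodMk hZ).aemeasurable
  conv_lhs => rw [← Measure.disintegrate (μ.map (fun ω => (W ω, Z ω))) (μ.map (fun ω => (W ω, Z ω))).condKernel]
  rw [Measure.compProd_apply hS]
  have hfst : (μ.map (fun ω => (W ω, Z ω))).fst = μ.map W :=
    Measure.fst_map_prodMk₀ hZ.aemeasurable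
  have hck : (μ.map (fun ω => (W ω, Z ω))).condKernel = condDistrib Z W μ := by rw [condDistrib]
  rw [hfst, hck]
  have : ∀ᵐ z ∂(μ.map W), condDistrib Z W μ z (Prod.mk z ⁻¹' S) = 0 := by
    filter_upwards [hdens] with z hz
    obtain ⟨f, hf⟩ := hz
    have hpre : Prod.mk z ⁻¹' S = {c z} := by
      ext t; simp [hSdef, Set.mem_singleton_iff]
    rw [hpre, hf, withDensity_apply f (measurableSet_singleton _),
      setLIntegral_measure_zero _ _ (measure_singleton _)]
  rw [lintegral_congr_ae this, lintegral_zero]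


set_option maxHeartbeats 1000000 in
set_option synthInstance.maxHeartbeats 400000 in
/-- Lemma 2, gradient part: If `β_m ≠ 0`, the conditional distribution of `X_m`
given `X_{-m}` admits a Lebesgue density a.s., and `E‖X‖ < ∞`, then the population SVM
objective `Q(θ) = E[1 - Y(α + X'β)]₊` is differentiable at `θ` with gradient
`∇Q(θ) = -E[1{1 - Y(α + X'β) > 0} · Y · (1, X')']`. -/
theorem stmt_2
    {Ω : Type*} [MeasurableSpace Ω] (μ : Measure Ω) [IsProbabilityMeasure μ]
    {d : ℕ} (Y : Ω → ℝ) (X : Ω → Euc (d + 1))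
    (hval : ∀ ω, Y ω = 1 ∨ Y ω = -1)
    (hYm : Measurable Y) (hXm : Measurable X)
    (hdens : hasCondDensity μ X)
    (hint : Integrable (fun ω => ‖X ω‖) μ)
    (θ : Euc (d + 2)) (hβm : θ (Fin.last (d + 1)) ≠ 0) :
    HasGradientAt (Qpop μ Y X)
      (-∫ ω, (if 0 < 1 - Y ω * ⟪θ, tl (X ω)⟫ then Y ω else 0) • tl (X ω) ∂μ) θ := by
  have habs : ∀ ω, |Y ω| = 1 := fun ω => by rcases hval ω with h | h <;> simp [h]
  set G : Ω → Euc (d + 2) :=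
    fun ω => (if 0 < 1 - Y ω * ⟪θ, tl (X ω)⟫ then Y ω else 0) • tl (X ω) with hGdef
  set F' : Ω → Euc (d + 2) →L[ℝ] ℝ :=
    fun ω => (InnerProductSpace.toDual ℝ (Euc (d + 2))) (-(G ω)) with hF'def
  -- basic measurability
  have hv : Measurable (fun ω => tl (X ω)) := measurable_tl.comp hXm
  have hip : ∀ θ' : Euc (d + 2), Measurable (fun ω => (⟪θ', tl (X ω)⟫ : ℝ)) :=
    fun θ' => (Continuous.inner continuous_const continuous_id).measurable.comp hv
  have hFmeas : ∀ θ' : Euc (d + 2),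
      Measurable (fun ω => hinge (Y ω * ⟪θ', tl (X ω)⟫)) := by
    intro θ'
    have hcont : Continuous hinge := (continuous_const.sub continuous_id).max continuous_const
    exact hcont.measurable.comp (hYm.mul (hip θ'))
  have hind : Measurable (fun ω => if 0 < 1 - Y ω * ⟪θ, tl (X ω)⟫ then Y ω else 0) :=
    Measurable.ite (measurableSet_lt measurable_const
      (measurable_const.sub (hYm.mul (hip θ)))) hYm measurable_const
  have hG : Measurable G := hind.smul hv
  -- integrable bound
  have hbound : Integrable (fun ω => 1 + ‖X ω‖) μ := (integrable_const 1).add hint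
  -- Lipschitz
  have hlip : ∀ ω, LipschitzWith (Real.nnabs (1 + ‖X ω‖))
      (fun θ' : Euc (d + 2) => hinge (Y ω * ⟪θ', tl (X ω)⟫)) := by
    intro ω
    set v := tl (X ω) with hvdef
    have h0 : (fun θ' : Euc (d + 2) => Y ω * ⟪θ', v⟫) = ⇑(Y ω • innerSL ℝ v) := by
      funext θ'
      simp only [ContinuousLinearMap.smul_apply, innerSL_apply_apply, smul_eq_mul]
      rw [real_inner_comm]
    have h1 : LipschitzWith ‖Y ω • innerSL ℝ v‖₊ (fun θ' : Euc (d + 2) => Y ω * ⟪θ', v⟫) := by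
      rw [h0]; exact (Y ω • innerSL ℝ v).lipschitz
    have h2 := lipschitz_hinge.comp h1
    refine h2.weaken ?_
    rw [one_mul, ← NNReal.coe_le_coe, coe_nnnorm, Real.coe_nnabs]
    refine (ContinuousLinearMap.opNorm_le_bound (M := 1 + ‖X ω‖) _ (by positivity) fun w => ?_).trans ?_
    · simp only [ContinuousLinearMap.smul_apply, innerSL_apply_apply, smul_eq_mul, Real.norm_eq_abs]
      rw [abs_mul, habs ω, one_mul]
      calc |(⟪v, w⟫ : ℝ)| ≤ ‖v‖ * ‖w‖ := abs_real_inner_le_norm _ _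
        _ ≤ (1 + ‖X ω‖) * ‖w‖ :=
            mul_le_mul_of_nonneg_right (norm_tl_le _) (norm_nonneg _)
    · exact le_abs_self _
  -- integrability of F θ
  have hFint : Integrable (fun ω => hinge (Y ω * ⟪θ, tl (X ω)⟫)) μ := by
    have hb2 : Integrable (fun ω => 1 + ‖θ‖ * (1 + ‖X ω‖)) μ :=
      (integrable_const 1).add (hbound.const_mul _)
    refine hb2.mono (hFmeas θ).aestronglyMeasurable (ae_of_all _ fun ω => ?_)
    have h1 : |(⟪θ, tl (X ω)⟫ : ℝ)| ≤ ‖θ‖ * (1 + ‖X ω‖) := by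
      calc |(⟪θ, tl (X ω)⟫ : ℝ)| ≤ ‖θ‖ * ‖tl (X ω)‖ := by
            simpa using abs_real_inner_le_norm θ (tl (X ω))
        _ ≤ ‖θ‖ * (1 + ‖X ω‖) :=
            mul_le_mul_of_nonneg_left (norm_tl_le _) (norm_nonneg _)
    have h2 : |Y ω * ⟪θ, tl (X ω)⟫| ≤ ‖θ‖ * (1 + ‖X ω‖) := by
      rw [abs_mul, habs ω, one_mul]; exact h1
    rw [Real.norm_eq_abs, Real.norm_eq_abs]
    have h3 : 0 ≤ hinge (Y ω * ⟪θ, tl (X ω)⟫) := le_max_right _ _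
    rw [abs_of_nonneg h3]
    have h4 : hinge (Y ω * ⟪θ, tl (X ω)⟫) ≤ 1 + |Y ω * ⟪θ, tl (X ω)⟫| := by
      unfold hinge
      rcases le_total (1 - Y ω * ⟪θ, tl (X ω)⟫) 0 with h | h
      · rw [max_eq_right h]; positivity
      · rw [max_eq_left h]
        have := neg_abs_le (Y ω * ⟪θ, tl (X ω)⟫); linarith
    have h5 : (0:ℝ) ≤ 1 + ‖θ‖ * (1 + ‖X ω‖) := by positivity
    rw [abs_of_nonneg h5]
    linarith
  -- integrability of G
  have hGint : Integrable G μ := by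
    refine hbound.mono hG.aestronglyMeasurable (ae_of_all _ fun ω => ?_)
    rw [hGdef, norm_smul, Real.norm_eq_abs]
    have h1 : |if 0 < 1 - Y ω * ⟪θ, tl (X ω)⟫ then Y ω else 0| ≤ 1 := by
      split <;> simp [habs ω]
    calc _ ≤ 1 * ‖tl (X ω)‖ := mul_le_mul_of_nonneg_right h1 (norm_nonneg _)
      _ = ‖tl (X ω)‖ := one_mul _
      _ ≤ 1 + ‖X ω‖ := norm_tl_le _
      _ ≤ ‖1 + ‖X ω‖‖ := le_abs_self _
  -- a.e. differentiability
  have hbad : μ {ω | Y ω * ⟪θ, tl (X ω)⟫ = 1} = 0 := by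
    refine measure_mono_null (fun ω hω => ?_)
      (measure_union_null (null_level μ X hXm hdens θ hβm 1)
        (null_level μ X hXm hdens θ hβm (-1)))
    rcases hval ω with h | h
    · left; simp only [mem_setOf_eq] at hω ⊢; rw [h, one_mul] at hω; exact hω
    · right; simp only [mem_setOf_eq] at hω ⊢; rw [h] at hω; linarith
  have hdiff : ∀ᵐ ω ∂μ, HasFDerivAt
      (fun θ' : Euc (d + 2) => hinge (Y ω * ⟪θ', tl (X ω)⟫)) (F' ω) θ := by
    rw [ae_iff]
    refine measure_mono_null (fun ω hω => ?_) hbad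
    simp only [mem_setOf_eq] at hω ⊢
    by_contra hne
    apply hω
    set v := tl (X ω) with hvdef
    have hinner : HasFDerivAt (fun θ' : Euc (d + 2) => (⟪θ', v⟫ : ℝ)) (innerSL ℝ v) θ := by
      refine ((innerSL ℝ v).hasFDerivAt (x := θ)).congr_of_eventuallyEq
        (Filter.Eventually.of_forall fun w => ?_)
      simp only [innerSL_apply_apply]
      exact real_inner_comm v w
    have hd0 : HasFDerivAt (fun θ' : Euc (d + 2) => Y ω * ⟪θ', v⟫)
        (Y ω • innerSL ℝ v) θ := hinner.const_mul (Y ω)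
    have hgc : Continuous (fun θ' : Euc (d + 2) => Y ω * ⟪θ', v⟫) :=
      continuous_const.mul (Continuous.inner continuous_id continuous_const)
    rcases lt_trichotomy (Y ω * ⟪θ, v⟫) 1 with hlt | heq | hgt
    · have hev : ∀ᶠ θ' in 𝓝 θ, Y ω * ⟪θ', v⟫ < 1 :=
        hgc.continuousAt.eventually_lt continuousAt_const hlt
      have heq2 : (fun θ' : Euc (d + 2) => hinge (Y ω * ⟪θ', v⟫))
          =ᶠ[𝓝 θ] (fun θ' => 1 - Y ω * ⟪θ', v⟫) := by
        filter_upwards [hev] with θ' h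
        unfold hinge; rw [max_eq_left (by linarith)]
      have hd : HasFDerivAt (fun θ' : Euc (d + 2) => 1 - Y ω * ⟪θ', v⟫)
          (-(Y ω • innerSL ℝ v)) θ := hd0.const_sub 1
      have hF'eq : F' ω = -(Y ω • innerSL ℝ v) := by
        simp only [hF'def, hGdef]
        ext w
        rw [if_pos (show (0:ℝ) < 1 - Y ω * ⟪θ, tl (X ω)⟫ by rw [← hvdef]; linarith)]
        simp only [ContinuousLinearMap.neg_apply, ContinuousLinearMap.smul_apply,
          innerSL_apply_apply, InnerProductSpace.toDual_apply_apply, inner_neg_left, inner_smul_left,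
          conj_trivial, smul_eq_mul, hvdef]
      rw [hF'eq]
      exact hd.congr_of_eventuallyEq heq2
    · exact absurd heq hne
    · have hev : ∀ᶠ θ' in 𝓝 θ, 1 < Y ω * ⟪θ', v⟫ :=
        continuousAt_const.eventually_lt hgc.continuousAt hgt
      have heq2 : (fun θ' : Euc (d + 2) => hinge (Y ω * ⟪θ', v⟫))
          =ᶠ[𝓝 θ] (fun _ => (0:ℝ)) := by
        filter_upwards [hev] with θ' h
        unfold hinge; rw [max_eq_right (by linarith)]
      have hF'eq : F' ω = 0 := by
        simp only [hF'def, hGdef]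
        have hng : ¬ (0 < 1 - Y ω * ⟪θ, tl (X ω)⟫) := by rw [← hvdef]; linarith
        rw [if_neg hng, zero_smul, neg_zero, map_zero]
      rw [hF'eq]
      exact (hasFDerivAt_const (0:ℝ) θ).congr_of_eventuallyEq heq2
  -- measurability of F'
  have hF'meas : AEStronglyMeasurable F' μ := by
    have hsm : StronglyMeasurable (fun ω => -(G ω)) := hG.neg.stronglyMeasurable
    exact ((InnerProductSpace.toDual ℝ (Euc (d + 2))).continuous.comp_stronglyMeasurable
      hsm).aestronglyMeasurable
  -- main application
  obtain ⟨hIntF', hmain⟩ := hasFDerivAt_integral_of_dominated_loc_of_lip (s := Set.univ) Filter.univ_mem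
    (Filter.Eventually.of_forall fun θ' : Euc (d + 2) => (hFmeas θ').aestronglyMeasurable)
    hFint hF'meas
    (ae_of_all _ fun ω => ((hlip ω).lipschitzOnWith))
    hbound hdiff
  rw [hasGradientAt_iff_hasFDerivAt]
  have hEq : ∫ ω, F' ω ∂μ = (InnerProductSpace.toDual ℝ (Euc (d + 2))) (-∫ ω, G ω ∂μ) := by
    ext w
    rw [ContinuousLinearMap.integral_apply hIntF']
    calc ∫ ω, F' ω w ∂μ = ∫ ω, -(⟪w, G ω⟫ : ℝ) ∂μ := by
          refine integral_congr_ae (ae_of_all _ fun ω => ?_)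
          simp only [hF'def, InnerProductSpace.toDual_apply_apply, inner_neg_left]
          rw [real_inner_comm]
      _ = -∫ ω, (⟪w, G ω⟫ : ℝ) ∂μ := integral_neg _
      _ = -(⟪w, ∫ ω, G ω ∂μ⟫ : ℝ) := by rw [integral_inner hGint]
      _ = (⟪w, -∫ ω, G ω ∂μ⟫ : ℝ) := by rw [inner_neg_right]
      _ = _ := by
          rw [InnerProductSpace.toDual_apply_apply]
          exact (real_inner_comm _ _)
  rw [← hEq]
  exact hmain

end
end

section
/- Suppose (Y_i, X_i), i = 1,…,n, are i.i.d. with Y_i ∈ {−1, 1} and X_i ℝ^m-valued, A ⊂ ℝ is compact, β* ∈ ℝ^m is such that β*'X has a Lebesgue density, and β̂ is a sequence of random vectors with β̂ →p β*. Then sup_{α ∈ A} | Q̂_ms(α, β̂) − Q̂_ms(α, β*) | →p 0 as n → ∞, where Q̂_ms(α, β) = n⁻¹ Σ_{i=1}^n Y_i·1{α + β'X_i ≥ 0}. -/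
open MeasureTheory ProbabilityTheory Filter Set
open scoped ENNReal Topology RealInnerProductSpace BigOperators

noncomputable section

variable {Ω : Type*}

/-- Concentration: an absolutely continuous finite measure puts uniformly small mass on
short intervals. -/
lemma aux_conc (ν : Measure ℝ) [IsFiniteMeasure ν] (hac : ν ≪ MeasureTheory.volume)
    {ε : ℝ} (hε : 0 < ε) :
    ∃ c : ℝ, 0 < c ∧ ∀ x : ℝ, ν (Set.Ioc x (x + c)) ≤ ENNReal.ofReal ε := by
  have hfin : ∫⁻ x, ν.rnDeriv MeasureTheory.volume x ∂MeasureTheory.volume ≠ ∞ := by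
    rw [Measure.lintegral_rnDeriv hac]
    exact measure_ne_top ν _
  obtain ⟨δ, hδ0, hδ⟩ := exists_pos_setLIntegral_lt_of_measure_lt (μ := MeasureTheory.volume)
    hfin (ε := ENNReal.ofReal ε) (by simp [hε, ENNReal.ofReal_pos.2 hε] : ENNReal.ofReal ε ≠ 0)
  obtain ⟨c, hc0, hcδ⟩ : ∃ c : ℝ, 0 < c ∧ ENNReal.ofReal c < δ := by
    rcases ENNReal.lt_iff_exists_real_btwn.1 hδ0 with ⟨r, _, hr0, hrδ⟩
    exact ⟨r, ENNReal.ofReal_pos.1 hr0, hrδ⟩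
  refine ⟨c, hc0, fun x => ?_⟩
  have h1 : ν (Set.Ioc x (x + c)) = ∫⁻ y in Set.Ioc x (x + c), ν.rnDeriv MeasureTheory.volume y ∂MeasureTheory.volume := by
    conv_lhs => rw [← Measure.withDensity_rnDeriv_eq ν MeasureTheory.volume hac]
    rw [withDensity_apply _ measurableSet_Ioc]
  rw [h1]
  refine le_of_lt (hδ _ ?_)
  rw [Real.volume_Ioc]
  simpa using hcδ

open Classical in
lemma aux_lln {Ω : Type*} [MeasurableSpace Ω] (μ : Measure Ω) [IsProbabilityMeasure μ]
    {m : ℕ} (Ys : ℕ → Ω → ℝ) (Xs : ℕ → Ω → Euc m)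
    (hmeas : ∀ n, Measurable (Ys n) ∧ Measurable (Xs n))
    (hindep : iIndepFun (fun n ω => (Ys n ω, Xs n ω)) μ)
    (hident : ∀ n, μ.map (fun ω => (Ys n ω, Xs n ω)) = μ.map (fun ω => (Ys 0 ω, Xs 0 ω)))
    (s : Set (ℝ × Euc m)) (hs : MeasurableSet s) :
    TendstoInMeasure μ
      (fun (n : ℕ) ω => (1/(n:ℝ)) * ∑ i ∈ Finset.range n,
        (if (Ys i ω, Xs i ω) ∈ s then (1:ℝ) else 0)) atTop
      (fun _ => (μ {ω | (Ys 0 ω, Xs 0 ω) ∈ s}).toReal) := by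
  set g : ℝ × Euc m → ℝ := s.indicator (fun _ => 1) with hg_def
  have hg : Measurable g := measurable_const.indicator hs
  set Z : ℕ → Ω → ℝ := fun i => g ∘ (fun ω => (Ys i ω, Xs i ω)) with hZ_def
  have hpm : ∀ i, Measurable (fun ω => (Ys i ω, Xs i ω)) :=
    fun i => (hmeas i).1.prodMk (hmeas i).2
  have hZm : ∀ i, Measurable (Z i) := fun i => hg.comp (hpm i)
  have hZeq : ∀ i ω, Z i ω = if (Ys i ω, Xs i ω) ∈ s then (1:ℝ) else 0 := by
    intro i ω
    simp [hZ_def, hg_def, Set.indicator_apply]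
  have hint : Integrable (Z 0) μ := by
    refine Integrable.mono' (integrable_const 1) (hZm 0).aestronglyMeasurable ?_
    filter_upwards with ω
    rw [hZeq]
    split <;> simp
  have hind : Pairwise (Function.onFun (IndepFun · · μ) Z) := by
    intro i j hij
    exact (hindep.comp (fun _ => g) (fun _ => hg)).indepFun hij
  have hid : ∀ i, IdentDistrib (Z i) (Z 0) μ μ := by
    intro i
    have hpair : IdentDistrib (fun ω => (Ys i ω, Xs i ω)) (fun ω => (Ys 0 ω, Xs 0 ω)) μ μ :=
      ⟨(hpm i).aemeasurable, (hpm 0).aemeasurable, hident i⟩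
    exact hpair.comp hg
  have hInt : ∫ ω, Z 0 ω ∂μ = (μ {ω | (Ys 0 ω, Xs 0 ω) ∈ s}).toReal := by
    have h1 : (fun ω => Z 0 ω) =
        Set.indicator ((fun ω => (Ys 0 ω, Xs 0 ω)) ⁻¹' s) (fun _ => (1:ℝ)) := by
      funext ω
      rw [hZeq]
      simp [Set.indicator_apply, Set.mem_preimage]
    rw [h1, integral_indicator_const _ (hpm 0 hs)]
    simp [Set.preimage, measureReal_def]
  have hae := strong_law_ae_real Z hint hind hid
  have haem : ∀ n : ℕ, AEStronglyMeasurable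
      (fun ω => (1/(n:ℝ)) * ∑ i ∈ Finset.range n,
        (if (Ys i ω, Xs i ω) ∈ s then (1:ℝ) else 0)) μ := by
    intro n
    refine (Measurable.aestronglyMeasurable ?_)
    exact (Finset.measurable_sum _ (fun i _ => by
      convert hZm i using 1; funext ω; exact (hZeq i ω).symm)).const_mul _
  refine tendstoInMeasure_of_tendsto_ae haem ?_
  filter_upwards [hae] with ω hω
  rw [← hInt]
  have heq : (fun n : ℕ => (1/(n:ℝ)) * ∑ i ∈ Finset.range n,
      (if (Ys i ω, Xs i ω) ∈ s then (1:ℝ) else 0)) =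
      fun n : ℕ => (∑ i ∈ Finset.range n, Z i ω) / n := by
    funext n
    rw [one_div, inv_mul_eq_div]
    congr 1
  rw [heq]
  exact hω

/-- Pointwise bound on the change of the score indicator. -/
lemma aux_step (y a w bb nrm M δ η : ℝ) (hy : y = 1 ∨ y = -1)
    (hδ : 0 ≤ δ) (hη : 0 < η) (hM : 0 ≤ M) (hnrm : 0 ≤ nrm)
    (hcs : |bb - w| ≤ δ * nrm) :
    |y * (if 0 ≤ a + bb then (1:ℝ) else 0) - y * (if 0 ≤ a + w then (1:ℝ) else 0)|
      ≤ (if M < nrm then (1:ℝ) else 0)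
        + ((if w ≤ -a + δ*M then (1:ℝ) else 0) - (if w ≤ -a - δ*M - η then (1:ℝ) else 0)) := by
  have hy1 : |y| = 1 := by rcases hy with h | h <;> simp [h]
  rw [← mul_sub, abs_mul, hy1, one_mul]
  have hδM : 0 ≤ δ * M := mul_nonneg hδ hM
  rcases abs_le.1 hcs with ⟨hcs1, hcs2⟩
  by_cases h1 : 0 ≤ a + bb <;> by_cases h2 : 0 ≤ a + w
  · simp only [if_pos h1, if_pos h2, sub_self, abs_zero]
    have hmono : (if w ≤ -a - δ*M - η then (1:ℝ) else 0) ≤ (if w ≤ -a + δ*M then (1:ℝ) else 0) := by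
      split_ifs with hu hv <;> try linarith
    split_ifs with hn <;> linarith
  · -- a + bb ≥ 0 > a + w, so -(a+w) ≤ bb - w ≤ δ nrm
    push_neg at h2
    have hw : |a + w| ≤ δ * nrm := by
      rw [abs_of_neg h2]; linarith
    rcases le_or_gt nrm M with hle | hlt
    · have hwM : |a + w| ≤ δ * M := hw.trans (by nlinarith)
      rcases abs_le.1 hwM with ⟨hw1, hw2⟩
      rw [if_pos h1, if_neg (not_le.2 h2), if_pos (by linarith : w ≤ -a + δ*M),
        if_neg (by push_neg; linarith : ¬ w ≤ -a - δ*M - η)]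
      have : (0:ℝ) ≤ if M < nrm then 1 else 0 := by positivity
      simp only [sub_zero, zero_sub, abs_neg, abs_one]
      linarith
    · rw [if_pos hlt]
      have hmono : (if w ≤ -a - δ*M - η then (1:ℝ) else 0) ≤ (if w ≤ -a + δ*M then (1:ℝ) else 0) := by
        split_ifs with hu hv <;> try linarith
      rw [if_pos h1, if_neg (not_le.2 h2)]
      simp only [sub_zero, abs_one]
      linarith
  · -- a + w ≥ 0 > a + bb
    push_neg at h1
    have hw : |a + w| ≤ δ * nrm := by
      rw [abs_of_nonneg h2]; linarith
    rcases le_or_gt nrm M with hle | hlt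
    · have hwM : |a + w| ≤ δ * M := hw.trans (by nlinarith)
      rcases abs_le.1 hwM with ⟨hw1, hw2⟩
      rw [if_neg (not_le.2 h1), if_pos h2, if_pos (by linarith : w ≤ -a + δ*M),
        if_neg (by push_neg; linarith : ¬ w ≤ -a - δ*M - η)]
      have : (0:ℝ) ≤ if M < nrm then 1 else 0 := by positivity
      simp only [sub_zero, zero_sub, abs_neg, abs_one]
      linarith
    · rw [if_pos hlt]
      have hmono : (if w ≤ -a - δ*M - η then (1:ℝ) else 0) ≤ (if w ≤ -a + δ*M then (1:ℝ) else 0) := by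
        split_ifs with hu hv <;> try linarith
      rw [if_neg (not_le.2 h1), if_pos h2]
      simp only [zero_sub, abs_neg, abs_one]
      linarith
  · simp only [if_neg h1, if_neg h2, sub_self, abs_zero]
    have hmono : (if w ≤ -a - δ*M - η then (1:ℝ) else 0) ≤ (if w ≤ -a + δ*M then (1:ℝ) else 0) := by
      split_ifs with hu hv <;> try linarith
    split_ifs with hn <;> linarith

set_option maxHeartbeats 2000000 in
/-- For i.i.d. `(Y_i, X_i)` with `Y_i = ±1`, a compact `A ⊂ ℝ`, a `β*` such that
`β*'X` has a Lebesgue density, and `β̂ →p β*`, the maximum score objective converges uniformly: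
`sup_{α ∈ A} |Q̂_ms(α, β̂) - Q̂_ms(α, β*)| →p 0`. -/
theorem stmt_9
    {Ω : Type*} [MeasurableSpace Ω] (μ : Measure Ω) [IsProbabilityMeasure μ]
    {m : ℕ} (Ys : ℕ → Ω → ℝ) (Xs : ℕ → Ω → Euc m)
    (hval : ∀ n ω, Ys n ω = 1 ∨ Ys n ω = -1)
    (hmeas : ∀ n, Measurable (Ys n) ∧ Measurable (Xs n))
    (hindep : iIndepFun (fun n ω => (Ys n ω, Xs n ω)) μ)
    (hident : ∀ n, μ.map (fun ω => (Ys n ω, Xs n ω)) = μ.map (fun ω => (Ys 0 ω, Xs 0 ω)))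
    (A : Set ℝ) (hA : IsCompact A)
    (βstar : Euc m)
    (hdens : μ.map (fun ω => ⟪βstar, Xs 0 ω⟫) ≪ MeasureTheory.volume)
    (bhat : ℕ → Ω → Euc m)
    (hconv : TendstoInMeasure μ bhat atTop (fun _ => βstar)) :
    TendstoInMeasure μ
      (fun n ω => ⨆ a ∈ A, |Qms Ys Xs n ω a (bhat n ω) - Qms Ys Xs n ω a βstar|)
      atTop (fun _ => (0 : ℝ)) := by
  classical
  rw [tendstoInMeasure_iff_dist]
  intro ε hε
  -- the index variable
  set W : ℕ → Ω → ℝ := fun i ω => ⟪βstar, Xs i ω⟫ with hW_def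
  have hWmeas : ∀ i, Measurable (W i) :=
    fun i => Measurable.inner measurable_const (hmeas i).2
  set ν : Measure ℝ := μ.map (W 0) with hν_def
  haveI hνprob : IsProbabilityMeasure ν := Measure.isProbabilityMeasure_map (hWmeas 0).aemeasurable
  -- concentration constant
  obtain ⟨c, hc, hconc⟩ := aux_conc ν hdens (by linarith : (0:ℝ) < ε/4)
  -- tail truncation level M
  obtain ⟨M, hM0, hMtail⟩ : ∃ M : ℝ, 0 ≤ M ∧ (μ {ω | M < ‖Xs 0 ω‖}).toReal ≤ ε/8 := by
    have hmeasS : ∀ k : ℕ, MeasurableSet {ω | (k:ℝ) < ‖Xs 0 ω‖} :=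
      fun k => measurableSet_lt measurable_const (hmeas 0).2.norm
    have hanti : Antitone (fun k : ℕ => {ω | (k:ℝ) < ‖Xs 0 ω‖}) := by
      intro k k' hkk' ω hω
      exact lt_of_le_of_lt (by exact_mod_cast hkk' : (k:ℝ) ≤ (k':ℝ)) hω
    have hempty : (⋂ k : ℕ, {ω | (k:ℝ) < ‖Xs 0 ω‖}) = (∅ : Set Ω) := by
      ext ω
      simp only [Set.mem_iInter, Set.mem_setOf_eq, Set.mem_empty_iff_false, iff_false, not_forall,
        not_lt]
      obtain ⟨k, hk⟩ := exists_nat_gt ‖Xs 0 ω‖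
      exact ⟨k, hk.le⟩
    have htend : Tendsto (fun k : ℕ => μ {ω | (k:ℝ) < ‖Xs 0 ω‖}) atTop (𝓝 0) := by
      have := tendsto_measure_iInter_atTop (μ := μ)
        (fun k => (hmeasS k).nullMeasurableSet) hanti ⟨0, measure_ne_top μ _⟩
      rwa [hempty, measure_empty] at this
    have hev := htend.eventually_lt_const (by simp [hε] : (0:ℝ≥0∞) < ENNReal.ofReal (ε/8))
    obtain ⟨k, hk⟩ := hev.exists
    exact ⟨(k:ℝ), Nat.cast_nonneg k,
      ENNReal.toReal_le_of_le_ofReal (by linarith) hk.le⟩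
  -- parameters
  set δ : ℝ := c/(8*(M+1)) with hδ_def
  have hδpos : 0 < δ := by positivity
  have hδM : δ * M ≤ c/8 := by
    rw [hδ_def, div_mul_eq_mul_div, div_le_div_iff₀ (by positivity) (by norm_num)]
    nlinarith
  have hδMpos : 0 ≤ δ * M := mul_nonneg hδpos.le hM0
  set η : ℝ := c/4 with hη_def
  have hηpos : 0 < η := by positivity
  set st : ℝ := c/8 with hst_def
  have hstpos : 0 < st := by positivity
  -- bound for the compact set A
  obtain ⟨L, hL0, hAL⟩ : ∃ L : ℝ, 0 ≤ L ∧ ∀ a ∈ A, |a| ≤ L := by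
    obtain ⟨r, hr⟩ := hA.isBounded.subset_closedBall 0
    refine ⟨max r 0, le_max_right _ _, fun a ha => ?_⟩
    have := hr ha
    rw [Metric.mem_closedBall, Real.dist_eq, sub_zero] at this
    exact this.trans (le_max_left _ _)
  set K : ℕ := ⌈(L + δ*M + η + st)/st⌉₊ with hK_def
  have hK : L + δ*M + η + st ≤ st * K := by
    have h1 := Nat.le_ceil ((L + δ*M + η + st)/st)
    rw [div_le_iff₀ hstpos] at h1
    linarith
  set J : Finset ℤ := Finset.Icc (-(K:ℤ)) (K:ℤ) with hJ_def
  -- empirical quantities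
  set Hn : ℕ → Ω → ℝ := fun n ω => (1/(n:ℝ)) * ∑ i ∈ Finset.range n,
    (if M < ‖Xs i ω‖ then (1:ℝ) else 0) with hHn_def
  set pM : ℝ := (μ {ω | M < ‖Xs 0 ω‖}).toReal with hpM_def
  set Fn : ℝ → ℕ → Ω → ℝ := fun t n ω => (1/(n:ℝ)) * ∑ i ∈ Finset.range n,
    (if W i ω ≤ t then (1:ℝ) else 0) with hFn_def
  set F : ℝ → ℝ := fun t => (ν (Set.Iic t)).toReal with hF_def
  -- laws of large numbers
  have hH : TendstoInMeasure μ Hn atTop (fun _ => pM) := by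
    have hsmeas : MeasurableSet {p : ℝ × Euc m | M < ‖p.2‖} :=
      measurableSet_lt measurable_const measurable_snd.norm
    have := aux_lln μ Ys Xs hmeas hindep hident _ hsmeas
    have heq : (fun (n : ℕ) ω => (1/(n:ℝ)) * ∑ i ∈ Finset.range n,
        (if (Ys i ω, Xs i ω) ∈ {p : ℝ × Euc m | M < ‖p.2‖} then (1:ℝ) else 0)) = Hn := by
      funext n ω
      rw [hHn_def]
      congr 1
    rwa [heq] at this
  have hFt : ∀ t : ℝ, TendstoInMeasure μ (Fn t) atTop (fun _ => F t) := by
    intro t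
    have hsmeas : MeasurableSet {p : ℝ × Euc m | ⟪βstar, p.2⟫ ≤ t} :=
      measurableSet_le (Measurable.inner measurable_const measurable_snd) measurable_const
    have h1 := aux_lln μ Ys Xs hmeas hindep hident _ hsmeas
    have heq : (fun (n : ℕ) ω => (1/(n:ℝ)) * ∑ i ∈ Finset.range n,
        (if (Ys i ω, Xs i ω) ∈ {p : ℝ × Euc m | ⟪βstar, p.2⟫ ≤ t} then (1:ℝ) else 0)) = Fn t := by
      funext n ω
      rw [hFn_def]
      congr 1
    have heq2 : (μ {ω | (Ys 0 ω, Xs 0 ω) ∈ {p : ℝ × Euc m | ⟪βstar, p.2⟫ ≤ t}}).toReal = F t := by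
      show _ = (ν (Set.Iic t)).toReal
      rw [hν_def, Measure.map_apply (hWmeas 0) measurableSet_Iic]
      rfl
    rwa [heq, heq2] at h1
  -- bad events
  set E1 : ℕ → Set Ω := fun n => {ω | δ ≤ dist (bhat n ω) βstar} with hE1_def
  set E2 : ℕ → Set Ω := fun n => {ω | ε/8 ≤ dist (Hn n ω) pM} with hE2_def
  set E3 : ℤ → ℕ → Set Ω := fun j n =>
    {ω | ε/8 ≤ dist (Fn (st*(j:ℝ)) n ω) (F (st*(j:ℝ)))} with hE3_def
  -- the key deterministic estimate
  have hkey : ∀ n : ℕ, ∀ ω : Ω, ω ∉ E1 n → ω ∉ E2 n → (∀ j ∈ J, ω ∉ E3 j n) →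
      ∀ a ∈ A, |Qms Ys Xs n ω a (bhat n ω) - Qms Ys Xs n ω a βstar| ≤ 3*ε/4 := by
    intro n ω h1 h2 h3 a ha
    rw [hE1_def, Set.mem_setOf_eq, not_le, dist_eq_norm] at h1
    rw [hE2_def, Set.mem_setOf_eq, not_le, Real.dist_eq] at h2
    have h3' : ∀ j ∈ J, |Fn (st*(j:ℝ)) n ω - F (st*(j:ℝ))| < ε/8 := by
      intro j hj
      have := h3 j hj
      rw [hE3_def, Set.mem_setOf_eq, not_le, Real.dist_eq] at this
      exact this
    set u : ℝ := -a - δ*M - η with hu_def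
    set v : ℝ := -a + δ*M with hv_def
    have huv : u ≤ v := by rw [hu_def, hv_def]; linarith
    -- step A: the basic bound
    have hstepA : |Qms Ys Xs n ω a (bhat n ω) - Qms Ys Xs n ω a βstar|
        ≤ Hn n ω + (Fn v n ω - Fn u n ω) := by
      have hterm : ∀ i ∈ Finset.range n,
          |Ys i ω * (if 0 ≤ a + ⟪bhat n ω, Xs i ω⟫ then (1:ℝ) else 0)
            - Ys i ω * (if 0 ≤ a + ⟪βstar, Xs i ω⟫ then (1:ℝ) else 0)|
          ≤ (if M < ‖Xs i ω‖ then (1:ℝ) else 0)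
            + ((if W i ω ≤ v then (1:ℝ) else 0) - (if W i ω ≤ u then (1:ℝ) else 0)) := by
        intro i _
        have hcs : |⟪bhat n ω, Xs i ω⟫ - W i ω| ≤ δ * ‖Xs i ω‖ := by
          rw [hW_def]
          rw [← inner_sub_left]
          refine (abs_real_inner_le_norm _ _).trans ?_
          exact mul_le_mul_of_nonneg_right h1.le (norm_nonneg _)
        have := aux_step (Ys i ω) a (W i ω) (⟪bhat n ω, Xs i ω⟫) (‖Xs i ω‖) M δ η
          (hval i ω) hδpos.le hηpos hM0 (norm_nonneg _) hcs
        rw [hu_def, hv_def]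
        convert this using 3 <;> rw [hW_def]
      have hQeq : Qms Ys Xs n ω a (bhat n ω) - Qms Ys Xs n ω a βstar
          = (1/(n:ℝ)) * ∑ i ∈ Finset.range n,
            (Ys i ω * (if 0 ≤ a + ⟪bhat n ω, Xs i ω⟫ then (1:ℝ) else 0)
              - Ys i ω * (if 0 ≤ a + ⟪βstar, Xs i ω⟫ then (1:ℝ) else 0)) := by
        simp only [Qms]
        rw [← mul_sub, ← Finset.sum_sub_distrib]
      rw [hQeq, abs_mul, abs_of_nonneg (by positivity : (0:ℝ) ≤ 1/(n:ℝ))]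
      have h2' : |∑ i ∈ Finset.range n,
            (Ys i ω * (if 0 ≤ a + ⟪bhat n ω, Xs i ω⟫ then (1:ℝ) else 0)
              - Ys i ω * (if 0 ≤ a + ⟪βstar, Xs i ω⟫ then (1:ℝ) else 0))|
          ≤ ∑ i ∈ Finset.range n, ((if M < ‖Xs i ω‖ then (1:ℝ) else 0)
            + ((if W i ω ≤ v then (1:ℝ) else 0) - (if W i ω ≤ u then (1:ℝ) else 0))) :=
        (Finset.abs_sum_le_sum_abs _ _).trans (Finset.sum_le_sum hterm)
      have h3'' : (1/(n:ℝ)) * ∑ i ∈ Finset.range n, ((if M < ‖Xs i ω‖ then (1:ℝ) else 0)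
            + ((if W i ω ≤ v then (1:ℝ) else 0) - (if W i ω ≤ u then (1:ℝ) else 0)))
          = Hn n ω + (Fn v n ω - Fn u n ω) := by
        rw [hHn_def, hFn_def]
        simp only [Finset.sum_add_distrib, Finset.sum_sub_distrib]
        ring
      calc (1/(n:ℝ)) * |∑ i ∈ Finset.range n,
            (Ys i ω * (if 0 ≤ a + ⟪bhat n ω, Xs i ω⟫ then (1:ℝ) else 0)
              - Ys i ω * (if 0 ≤ a + ⟪βstar, Xs i ω⟫ then (1:ℝ) else 0))|
          ≤ (1/(n:ℝ)) * ∑ i ∈ Finset.range n, ((if M < ‖Xs i ω‖ then (1:ℝ) else 0)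
            + ((if W i ω ≤ v then (1:ℝ) else 0) - (if W i ω ≤ u then (1:ℝ) else 0))) :=
            mul_le_mul_of_nonneg_left h2' (by positivity)
        _ = Hn n ω + (Fn v n ω - Fn u n ω) := h3''
    -- step B: grid points
    set k1 : ℤ := ⌊u/st⌋ with hk1_def
    set k2 : ℤ := ⌈v/st⌉ with hk2_def
    have hk1le : st*(k1:ℝ) ≤ u := by
      have := Int.floor_le (u/st)
      calc st*(k1:ℝ) ≤ st*(u/st) := by
            exact mul_le_mul_of_nonneg_left this hstpos.le
        _ = u := by field_simp
    have hk1gt : u - st < st*(k1:ℝ) := by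
      have := Int.sub_one_lt_floor (u/st)
      have h' : st*(u/st - 1) < st*(k1:ℝ) := by
        exact mul_lt_mul_of_pos_left this hstpos
      calc u - st = st*(u/st - 1) := by field_simp; try ring
        _ < st*(k1:ℝ) := h'
    have hk2ge : v ≤ st*(k2:ℝ) := by
      have := Int.le_ceil (v/st)
      calc v = st*(v/st) := by field_simp
        _ ≤ st*(k2:ℝ) := mul_le_mul_of_nonneg_left this hstpos.le
    have hk2lt : st*(k2:ℝ) < v + st := by
      have := Int.ceil_lt_add_one (v/st)
      have h' : st*(k2:ℝ) < st*(v/st + 1) := mul_lt_mul_of_pos_left this hstpos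
      calc st*(k2:ℝ) < st*(v/st + 1) := h'
        _ = v + st := by field_simp; try ring
    have haL := hAL a ha
    rcases abs_le.1 haL with ⟨haL1, haL2⟩
    have hu_abs : -(L + δ*M + η) ≤ u ∧ u ≤ L + δ*M + η := by
      constructor <;> (rw [hu_def]; linarith)
    have hv_abs : -(L + δ*M + η) ≤ v ∧ v ≤ L + δ*M + η := by
      constructor <;> (rw [hv_def]; linarith [hηpos.le])
    have hmemJ : ∀ k : ℤ, -(L + δ*M + η + st) ≤ st*(k:ℝ) → st*(k:ℝ) ≤ L + δ*M + η + st →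
        k ∈ J := by
      intro k hk1 hk2
      have habs : |st*(k:ℝ)| ≤ st * (K:ℝ) := by
        rw [abs_le]
        constructor <;> linarith
      rw [abs_mul, abs_of_pos hstpos] at habs
      have hkK : |(k:ℝ)| ≤ (K:ℝ) := le_of_mul_le_mul_left habs hstpos
      have : |k| ≤ (K:ℤ) := by exact_mod_cast (by rwa [← Int.cast_abs] at hkK :
        ((|k|:ℤ):ℝ) ≤ ((K:ℤ):ℝ))
      rw [hJ_def, Finset.mem_Icc]
      exact ⟨(abs_le.1 this).1, (abs_le.1 this).2⟩
    have hk1J : k1 ∈ J := by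
      refine hmemJ k1 ?_ ?_
      · linarith [hu_abs.1, hk1gt]
      · linarith [hu_abs.2, hk1le, hstpos.le]
    have hk2J : k2 ∈ J := by
      refine hmemJ k2 ?_ ?_
      · linarith [hv_abs.1, hk2ge]
      · linarith [hv_abs.2, hk2lt]
    -- monotonicity of Fn
    have hFnmono : ∀ s t : ℝ, s ≤ t → Fn s n ω ≤ Fn t n ω := by
      intro s t hstle
      rw [hFn_def]
      refine mul_le_mul_of_nonneg_left (Finset.sum_le_sum fun i _ => ?_) (by positivity)
      by_cases hws : W i ω ≤ s
      · simp [hws, hws.trans hstle]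
      · simp only [if_neg hws]
        positivity
    -- the measure of the grid interval
    have hk12 : st*(k1:ℝ) ≤ st*(k2:ℝ) := le_trans hk1le (le_trans huv hk2ge)
    have hFdiff : F (st*(k2:ℝ)) - F (st*(k1:ℝ)) ≤ ε/4 := by
      have hun : ν (Set.Iic (st*(k2:ℝ)))
          = ν (Set.Iic (st*(k1:ℝ))) + ν (Set.Ioc (st*(k1:ℝ)) (st*(k2:ℝ))) := by
        rw [← Set.Iic_union_Ioc_eq_Iic hk12,
          measure_union (Set.Iic_disjoint_Ioc le_rfl) measurableSet_Ioc]
      have hFsum : F (st*(k2:ℝ)) = F (st*(k1:ℝ)) + (ν (Set.Ioc (st*(k1:ℝ)) (st*(k2:ℝ)))).toReal := by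
        rw [hF_def]
        simp only
        rw [hun, ENNReal.toReal_add (measure_ne_top ν _) (measure_ne_top ν _)]
      have hsubset : Set.Ioc (st*(k1:ℝ)) (st*(k2:ℝ)) ⊆ Set.Ioc (st*(k1:ℝ)) (st*(k1:ℝ) + c) := by
        refine Set.Ioc_subset_Ioc_right ?_
        have hlen : st*(k2:ℝ) - st*(k1:ℝ) ≤ c := by
          have : v - u = 2*(δ*M) + η := by rw [hu_def, hv_def]; ring
          have h2st : 2*st = c/4 := by rw [hst_def]; ring
          have hη4 : η = c/4 := hη_def
          nlinarith [hk2lt, hk1gt, hδM]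
        linarith
      have hm': (ν (Set.Ioc (st*(k1:ℝ)) (st*(k2:ℝ)))).toReal ≤ ε/4 := by
        refine ENNReal.toReal_le_of_le_ofReal (by linarith) ?_
        exact le_trans (measure_mono hsubset) (hconc _)
      linarith [hFsum, hm']
    -- combine
    have hB : Fn v n ω - Fn u n ω ≤ ε/2 := by
      have hm1 := hFnmono (st*(k1:ℝ)) u hk1le
      have hm2 := hFnmono v (st*(k2:ℝ)) hk2ge
      have hg1 := h3' k1 hk1J
      have hg2 := h3' k2 hk2J
      rcases abs_lt.1 hg1 with ⟨hg1a, hg1b⟩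
      rcases abs_lt.1 hg2 with ⟨hg2a, hg2b⟩
      linarith [hFdiff]
    have hC : Hn n ω ≤ ε/4 := by
      rcases abs_lt.1 h2 with ⟨h2a, h2b⟩
      linarith [hMtail]
    linarith [hstepA, hB, hC]
  -- containment of the bad event
  have hsub : ∀ n : ℕ, {ω | ε ≤ dist ((fun n ω => ⨆ a ∈ A,
        |Qms Ys Xs n ω a (bhat n ω) - Qms Ys Xs n ω a βstar|) n ω) ((fun _ => (0:ℝ)) ω)}
      ⊆ E1 n ∪ (E2 n ∪ ⋃ j ∈ J, E3 j n) := by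
    intro n ω hω
    simp only [Set.mem_setOf_eq] at hω
    by_contra hcon
    have hc1 : ω ∉ E1 n := fun h => hcon (Set.mem_union_left _ h)
    have hc2 : ω ∉ E2 n := fun h => hcon (Set.mem_union_right _ (Set.mem_union_left _ h))
    have hc3' : ∀ j ∈ J, ω ∉ E3 j n := fun j hj h =>
      hcon (Set.mem_union_right _ (Set.mem_union_right _ (Set.mem_biUnion hj h)))
    have hbound := hkey n ω hc1 hc2 hc3'
    have hD0 : 0 ≤ ⨆ a ∈ A, |Qms Ys Xs n ω a (bhat n ω) - Qms Ys Xs n ω a βstar| :=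
      Real.iSup_nonneg (fun a => Real.iSup_nonneg (fun _ => abs_nonneg _))
    have hDle : (⨆ a ∈ A, |Qms Ys Xs n ω a (bhat n ω) - Qms Ys Xs n ω a βstar|) ≤ 3*ε/4 :=
      Real.iSup_le (fun a => Real.iSup_le (fun ha => hbound a ha) (by linarith)) (by linarith)
    rw [Real.dist_eq, sub_zero, abs_of_nonneg hD0] at hω
    linarith
  -- measures of the bad events tend to zero
  have hT1 : Tendsto (fun n => μ (E1 n)) atTop (𝓝 0) := tendstoInMeasure_iff_dist.1 hconv δ hδpos
  have hT2 : Tendsto (fun n => μ (E2 n)) atTop (𝓝 0) := tendstoInMeasure_iff_dist.1 hH (ε/8) (by linarith)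
  have hT3 : ∀ j : ℤ, Tendsto (fun n => μ (E3 j n)) atTop (𝓝 0) :=
    fun j => tendstoInMeasure_iff_dist.1 (hFt (st*(j:ℝ))) (ε/8) (by linarith)
  have hTsum : Tendsto (fun n => μ (E1 n) + (μ (E2 n) + ∑ j ∈ J, μ (E3 j n))) atTop (𝓝 0) := by
    have := hT1.add (hT2.add (tendsto_finset_sum J (fun j _ => hT3 j)))
    simpa using this
  refine tendsto_of_tendsto_of_tendsto_of_le_of_le tendsto_const_nhds hTsum
    (fun n => zero_le) (fun n => ?_)
  refine le_trans (measure_mono (hsub n)) ?_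
  refine le_trans (measure_union_le _ _) ?_
  gcongr
  refine le_trans (measure_union_le _ _) ?_
  gcongr
  exact measure_biUnion_finset_le J _


end
end

section
/- There do not exist a constant γ > 0 and a function G : ℝ → ℝ such that both −γ(1 − z)₊ = log G(z) and −γ(1 + z)₊ = log(1 − G(z)) hold for all z ∈ ℝ; equivalently, there is no γ > 0 with exp(−γ(1 − z)₊) + exp(−γ(1 + z)₊) = 1 for all z ∈ ℝ. Consequently, the SVM hinge-loss objective cannot be written, up to a positive scalar multiple, as the negative log-likelihood of a binary choice quasi-maximum likelihood estimator with any error distribution function G. -/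
/-- There do not exist a constant `γ > 0` and a function `G : ℝ → ℝ` such that
`-γ(1 - z)₊ = log G(z)` and `-γ(1 + z)₊ = log(1 - G(z))` for all `z`, i.e. such that
`G(z) = exp(-γ(1 - z)₊)` and `1 - G(z) = exp(-γ(1 + z)₊)` for all `z`; equivalently, there is
no `γ > 0` with `exp(-γ(1 - z)₊) + exp(-γ(1 + z)₊) = 1` for all `z`. Hence the SVM hinge-loss
objective cannot be written, up to a positive scalar multiple, as the negative log-likelihood
of a binary choice QMLE with any error distribution function `G`. -/
theorem stmt_16 :
    (¬ ∃ (γ : ℝ) (G : ℝ → ℝ), 0 < γ ∧ ∀ z : ℝ,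
      G z = Real.exp (-(γ * max (1 - z) 0)) ∧
      1 - G z = Real.exp (-(γ * max (1 + z) 0))) ∧
    (¬ ∃ γ : ℝ, 0 < γ ∧ ∀ z : ℝ,
      Real.exp (-(γ * max (1 - z) 0)) + Real.exp (-(γ * max (1 + z) 0)) = 1) := by
  have key : ¬ ∃ γ : ℝ, 0 < γ ∧ ∀ z : ℝ,
      Real.exp (-(γ * max (1 - z) 0)) + Real.exp (-(γ * max (1 + z) 0)) = 1 := by
    rintro ⟨γ, hγ, h⟩
    have h1 := h 1
    norm_num at h1
  refine ⟨?_, key⟩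
  rintro ⟨γ, G, hγ, h⟩
  exact key ⟨γ, hγ, fun z => by have ⟨h1, h2⟩ := h z; linarith⟩
end
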